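/- For every ε > 0 and every positive integer m there exists p_0 = p_0(ε, m) such that for every prime p ≥ p_0 there exist N ≥ 1 and a Euclidean sub-p-toral set B = {b_1, …, b_m} ⊆ R^N satisfying | ‖b_i − b_j‖ − |i − j| | < ε for all 1 ≤ i, j ≤ m. (One may take B to be m consecutive vertices of a suitably scaled regular p-gon.) -/

import Mathlib

section AuxSubPToral
open Complex Real

private lemma pow_mod_eq' {G : Type*} [Group G] {p : ℕ} {ζ : G} (hζ : ζ ^ p = 1) (x : ℕ) :
    ζ ^ (x % p) = ζ ^ x := by
  conv_rhs => rw [← Nat.mod_add_div x p]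
  rw [pow_add, pow_mul, hζ, one_pow, mul_one]

private lemma abs_exp_mul_I_sub' (a b : ℝ) :
    ‖Complex.exp ((a : ℂ) * Complex.I) - Complex.exp ((b : ℂ) * Complex.I)‖
      = 2 * |Real.sin ((a - b) / 2)| := by
  have h : Complex.exp ((a : ℂ) * Complex.I) - Complex.exp ((b : ℂ) * Complex.I)
      = ((Real.cos a - Real.cos b : ℝ) : ℂ) + ((Real.sin a - Real.sin b : ℝ) : ℂ) * Complex.I := by
    rw [Complex.exp_mul_I, Complex.exp_mul_I, ← Complex.ofReal_cos, ← Complex.ofReal_cos,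
      ← Complex.ofReal_sin, ← Complex.ofReal_sin]
    push_cast
    ring
  rw [h, Complex.norm_def, Complex.normSq_add_mul_I]
  have key : (Real.cos a - Real.cos b) ^ 2 + (Real.sin a - Real.sin b) ^ 2
      = (2 * |Real.sin ((a - b) / 2)|) ^ 2 := by
    rw [Real.cos_sub_cos, Real.sin_sub_sin]
    nlinarith [Real.sin_sq_add_cos_sq ((a + b) / 2), _root_.sq_abs (Real.sin ((a - b) / 2))]
  rw [key, Real.sqrt_sq (by positivity)]

private lemma abs_sin_of_abs_le' {x : ℝ} (h : |x| ≤ π) : |Real.sin x| = Real.sin |x| := by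
  rcases le_or_gt 0 x with hx | hx
  · rw [_root_.abs_of_nonneg hx] at h ⊢
    exact _root_.abs_of_nonneg (Real.sin_nonneg_of_nonneg_of_le_pi hx h)
  · rw [_root_.abs_of_neg hx] at h ⊢
    have h2 : 0 ≤ Real.sin (-x) := Real.sin_nonneg_of_nonneg_of_le_pi (by linarith) h
    have h3 : Real.sin x ≤ 0 := by rw [Real.sin_neg] at h2; linarith
    rw [_root_.abs_of_nonpos h3, Real.sin_neg]

noncomputable def conjIsomHom {E : Type*} [NormedAddCommGroup E] [InnerProductSpace ℝ E]
    (f : ℂ ≃ₗᵢ[ℝ] E) : (ℂ ≃ₗᵢ[ℝ] ℂ) →* (E ≃ᵢ E) where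
  toFun A := (f.symm.trans (A.trans f)).toIsometryEquiv
  map_one' := by
    ext x
    simp [LinearIsometryEquiv.trans_apply]
  map_mul' A B := by
    ext x
    simp [LinearIsometryEquiv.trans_apply, IsometryEquiv.mul_apply,
      LinearIsometryEquiv.coe_mul]

end AuxSubPToral

/-- A finite set `X ⊆ ℝ^k` is *Euclidean sub-p-toral* if some isometric copy of `X`
in a possibly larger `ℝ^n` is contained in an orbit of a finite group of isometries
of `ℝ^n` isomorphic to `(ℤ/p)^α`. -/
def EuclideanSubPToral (p : ℕ) {k : ℕ} (X : Set (EuclideanSpace ℝ (Fin k))) : Prop :=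
  ∃ n : ℕ, k ≤ n ∧
    ∃ ι : X → EuclideanSpace ℝ (Fin n),
      (∀ x y : X, dist (ι x) (ι y) = dist (x : EuclideanSpace ℝ (Fin k)) y) ∧
      ∃ (G : Subgroup (EuclideanSpace ℝ (Fin n) ≃ᵢ EuclideanSpace ℝ (Fin n))) (α : ℕ),
        Nonempty (G ≃* Multiplicative (Fin α → ZMod p)) ∧
        ∃ v : EuclideanSpace ℝ (Fin n), ∀ x : X, ∃ g ∈ G,
          (g : EuclideanSpace ℝ (Fin n) ≃ᵢ EuclideanSpace ℝ (Fin n)) v = ι x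

set_option maxHeartbeats 1600000 in
/-- **Lemma 10 (sub-p-toral almost-arithmetic progressions).** For every `ε > 0` and
every positive integer `m` there is `p₀` such that for every prime `p ≥ p₀` there is a
Euclidean sub-p-toral set `{b₁, …, b_m}` with `| ‖bᵢ - bⱼ‖ - |i - j| | < ε` for all
`i, j`. (One may take `m` consecutive vertices of a suitably scaled regular `p`-gon.) -/
theorem exists_subPToral_near_arithmetic_progression (ε : ℝ) (hε : 0 < ε)
    (m : ℕ) (hm : 0 < m) :
    ∃ p₀ : ℕ, ∀ p : ℕ, p.Prime → p₀ ≤ p →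
      ∃ N : ℕ, 1 ≤ N ∧ ∃ b : Fin m → EuclideanSpace ℝ (Fin N),
        EuclideanSubPToral p (Set.range b) ∧
        ∀ i j : Fin m, abs (‖b i - b j‖ - |(i.val : ℝ) - (j.val : ℝ)|) < ε := by
  refine ⟨4 * m + ⌈10 * (m : ℝ) ^ 3 / ε⌉₊ + 5, fun p hp hpp₀ => ?_⟩
  have hp0 : 0 < p := hp.pos
  haveI : NeZero p := ⟨hp0.ne'⟩
  have hpR : (0 : ℝ) < p := by exact_mod_cast hp0
  have hmp : 4 * m + 5 ≤ p := by omega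
  have hmlt : m < p := by omega
  have hp5 : (5 : ℝ) ≤ p := by exact_mod_cast (by omega : 5 ≤ p)
  have h4mp : (4 : ℝ) * m ≤ p := by exact_mod_cast (by omega : 4 * m ≤ p)
  have hmR : (1 : ℝ) ≤ m := by exact_mod_cast hm
  have hεp : 10 * (m : ℝ) ^ 3 ≤ ε * p := by
    have h1 : (10 * (m : ℝ) ^ 3 / ε) ≤ (⌈10 * (m : ℝ) ^ 3 / ε⌉₊ : ℝ) := Nat.le_ceil _
    have h2 : ((⌈10 * (m : ℝ) ^ 3 / ε⌉₊ : ℕ) : ℝ) ≤ p := by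
      exact_mod_cast (by omega : ⌈10 * (m : ℝ) ^ 3 / ε⌉₊ ≤ p)
    have := (div_le_iff₀ hε).mp (h1.trans h2)
    linarith
  have hpi := Real.pi_pos
  have hpi4 := Real.pi_le_four
  set θ : ℝ := 2 * Real.pi / p with hθdef
  set ζ : Circle := Circle.exp θ with hζdef
  set f : ℂ ≃ₗᵢ[ℝ] EuclideanSpace ℝ (Fin 2) := Complex.orthonormalBasisOneI.repr with hfdef
  set R : ℝ := p / (2 * Real.pi) with hRdef
  have hRpos : 0 < R := by positivity
  -- coercion of powers of ζ
  have hζn : ∀ n : ℕ, ((ζ ^ n : Circle) : ℂ) = Complex.exp (((n : ℝ) * θ : ℝ) * Complex.I) := by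
    intro n
    have h1 : ((ζ ^ n : Circle) : ℂ) = ((ζ : ℂ)) ^ n := map_pow Circle.coeHom ζ n
    rw [h1, hζdef, Circle.coe_exp, ← Complex.exp_nat_mul]
    congr 1
    push_cast
    ring
  have hζp : ζ ^ p = 1 := by
    apply Circle.ext
    rw [hζn p, Circle.coe_one]
    have harg : ((p : ℝ) * θ : ℝ) = 2 * Real.pi := by
      rw [hθdef]; field_simp
    rw [harg]
    have := Complex.exp_two_pi_mul_I
    rw [← this]
    congr 1
    push_cast
    ring
  -- the homomorphism
  let Φ₁ : Multiplicative (ZMod p) →* Circle :=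
    { toFun := fun d => ζ ^ (Multiplicative.toAdd d).val
      map_one' := by simp
      map_mul' := fun a b => by
        simp only [toAdd_mul]
        rw [ZMod.val_add, pow_mod_eq' hζp, pow_add] }
  let Φ : Multiplicative (ZMod p) →*
      (EuclideanSpace ℝ (Fin 2) ≃ᵢ EuclideanSpace ℝ (Fin 2)) :=
    ((conjIsomHom f).comp rotation).comp Φ₁
  have happ : ∀ (d : Multiplicative (ZMod p)) (z : ℂ),
      Φ d (f z) = f ((((ζ ^ (Multiplicative.toAdd d).val : Circle)) : ℂ) * z) := by
    intro d z
    show (f.symm.trans ((rotation (ζ ^ (Multiplicative.toAdd d).val)).trans f)).toIsometryEquiv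
        (f z) = _
    simp only [LinearIsometryEquiv.coe_toIsometryEquiv, LinearIsometryEquiv.trans_apply,
      LinearIsometryEquiv.symm_apply_apply, rotation_apply]
  -- injectivity
  have hz2 : ∀ n : ℕ, ((ζ ^ n : Circle) : ℂ) = Complex.exp (2 * Real.pi * Complex.I / p) ^ n := by
    intro n
    rw [hζn, ← Complex.exp_nat_mul]
    congr 1
    rw [hθdef]
    push_cast
    field_simp
  have hprim : IsPrimitiveRoot (Complex.exp (2 * Real.pi * Complex.I / p)) p :=
    Complex.isPrimitiveRoot_exp p hp0.ne'
  have hΦinj : Function.Injective Φ := by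
    intro a b hab
    have h1 : Φ a (f 1) = Φ b (f 1) := by rw [hab]
    rw [happ, happ] at h1
    have h2 := f.injective h1
    rw [mul_one, mul_one, hz2, hz2] at h2
    have h3 : (Multiplicative.toAdd a).val = (Multiplicative.toAdd b).val :=
      hprim.pow_inj (ZMod.val_lt _) (ZMod.val_lt _) h2
    have h4 : (Multiplicative.toAdd a) = (Multiplicative.toAdd b) := by
      have := congrArg (Nat.cast : ℕ → ZMod p) h3
      simpa [ZMod.natCast_val, ZMod.cast_id] using this
    exact Multiplicative.toAdd.injective h4
  -- the points
  refine ⟨2, by norm_num, fun j => f ((((ζ ^ (j : ℕ) : Circle)) : ℂ) * (R : ℂ)), ?_, ?_⟩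
  · -- EuclideanSubPToral
    refine ⟨2, le_refl 2, fun x => (x : EuclideanSpace ℝ (Fin 2)), fun x y => rfl, Φ.range, 1,
      ⟨?_⟩, f ((R : ℝ) : ℂ), ?_⟩
    · -- group iso
      refine (MonoidHom.ofInjective hΦinj).symm.trans (AddEquiv.toMultiplicative ?_)
      exact
        { toFun := fun x _ => x
          invFun := fun g => g 0
          left_inv := fun x => rfl
          right_inv := fun g => funext fun i => by rw [Subsingleton.elim i 0]
          map_add' := fun x y => rfl }
    · rintro ⟨x, j, rfl⟩
      refine ⟨Φ (Multiplicative.ofAdd ((j : ℕ) : ZMod p)), ⟨_, rfl⟩, ?_⟩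
      rw [happ]
      simp only [toAdd_ofAdd]
      rw [ZMod.val_natCast_of_lt (lt_trans j.isLt hmlt)]
  · -- distances
    intro i j
    have hiR : (i.val : ℝ) < m := by exact_mod_cast i.isLt
    have hjR : (j.val : ℝ) < m := by exact_mod_cast j.isLt
    have hi0 : (0 : ℝ) ≤ (i.val : ℝ) := Nat.cast_nonneg _
    have hj0 : (0 : ℝ) ≤ (j.val : ℝ) := Nat.cast_nonneg _
    set D : ℝ := |(i.val : ℝ) - (j.val : ℝ)| with hDdef
    have hD0 : 0 ≤ D := abs_nonneg _
    have hDm : D ≤ m := abs_le.mpr ⟨by linarith, by linarith⟩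
    -- norm computation
    have hnorm : ‖f ((((ζ ^ (i : ℕ) : Circle)) : ℂ) * (R : ℂ))
        - f ((((ζ ^ (j : ℕ) : Circle)) : ℂ) * (R : ℂ))‖
        = (p / Real.pi) * Real.sin (Real.pi * D / p) := by
      rw [← map_sub, f.norm_map]
      have h1 : (((ζ ^ (i : ℕ) : Circle)) : ℂ) * (R : ℂ) - (((ζ ^ (j : ℕ) : Circle)) : ℂ) * (R : ℂ)
          = ((((ζ ^ (i : ℕ) : Circle)) : ℂ) - (((ζ ^ (j : ℕ) : Circle)) : ℂ)) * (R : ℂ) := by ring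
      rw [h1, norm_mul, Complex.norm_real, Real.norm_eq_abs, hζn, hζn,
        abs_exp_mul_I_sub', _root_.abs_of_nonneg hRpos.le]
      have h2 : (((i.val : ℝ) * θ - (j.val : ℝ) * θ) / 2) = Real.pi * ((i.val : ℝ) - (j.val : ℝ)) / p := by
        rw [hθdef]; field_simp
      rw [h2]
      have h3 : |Real.pi * ((i.val : ℝ) - (j.val : ℝ)) / p| ≤ Real.pi := by
        rw [abs_div, abs_mul, _root_.abs_of_nonneg hpi.le, _root_.abs_of_nonneg hpR.le, ← hDdef]
        rw [div_le_iff₀ hpR]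
        nlinarith
      rw [abs_sin_of_abs_le' h3]
      have h4 : |Real.pi * ((i.val : ℝ) - (j.val : ℝ)) / p| = Real.pi * D / p := by
        rw [abs_div, abs_mul, _root_.abs_of_nonneg hpi.le, _root_.abs_of_nonneg hpR.le, ← hDdef]
      rw [h4, hRdef]
      field_simp
    rw [hnorm]
    clear hΦinj happ hz2 hprim Φ Φ₁ hζp hζn hζdef ζ hnorm hfdef f
    clear_value D
    -- numeric estimate
    set x : ℝ := Real.pi * D / p with hxdef
    have hx0 : 0 ≤ x := by positivity
    have hx1 : x ≤ 1 := by
      rw [hxdef, div_le_one hpR]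
      nlinarith
    have hsin_le : Real.sin x ≤ x := Real.sin_le hx0
    have hsin_ge : x - x ^ 3 / 4 ≤ Real.sin x := by
      rcases eq_or_lt_of_le hx0 with h | h
      · rw [← h]; norm_num
      · have := Real.sin_gt_sub_cube h
        nlinarith [pow_nonneg hx0 3]
    have hkey : (p / Real.pi) * x = D := by
      rw [hxdef]; field_simp
    have hcube : (p / Real.pi) * x ^ 3 / 4 < ε := by
      have e1 : (p / Real.pi) * x ^ 3 / 4 = Real.pi ^ 2 * D ^ 3 / (4 * (p : ℝ) ^ 2) := by
        rw [hxdef]; field_simp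
      rw [e1, div_lt_iff₀ (by positivity : (0 : ℝ) < 4 * (p : ℝ) ^ 2)]
      have hD3 : D ^ 3 ≤ (m : ℝ) ^ 3 := pow_le_pow_left₀ hD0 hDm 3
      have hD3nn : 0 ≤ D ^ 3 := by positivity
      have hpi2 : Real.pi ^ 2 ≤ 16 := by nlinarith
      have hb1 : Real.pi ^ 2 * D ^ 3 ≤ 16 * (m : ℝ) ^ 3 := by
        calc Real.pi ^ 2 * D ^ 3 ≤ 16 * D ^ 3 :=
              mul_le_mul_of_nonneg_right hpi2 hD3nn
          _ ≤ 16 * (m : ℝ) ^ 3 := by linarith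
      have hb2 : 16 * (m : ℝ) ^ 3 ≤ (8 / 5) * (ε * p) := by linarith
      have hεppos : 0 < ε * (p : ℝ) := mul_pos hε hpR
      have hb3 : (8 / 5) * (ε * p) < ε * (4 * (p : ℝ) ^ 2) := by
        nlinarith [mul_le_mul_of_nonneg_left hp5 hεppos.le]
      linarith
    have hppi : 0 ≤ (p : ℝ) / Real.pi := by positivity
    have hup : (p / Real.pi) * Real.sin x ≤ D := by
      calc (p / Real.pi) * Real.sin x ≤ (p / Real.pi) * x := by
            exact mul_le_mul_of_nonneg_left hsin_le hppi
        _ = D := hkey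
    have hlo : D - (p / Real.pi) * Real.sin x ≤ (p / Real.pi) * x ^ 3 / 4 := by
      have := mul_le_mul_of_nonneg_left hsin_ge hppi
      have h5 : (p / Real.pi) * (x - x ^ 3 / 4) = D - (p / Real.pi) * x ^ 3 / 4 := by
        rw [mul_sub, hkey]; ring
      linarith
    rw [abs_lt]
    constructor <;> linarith
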